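/- Let h ~ Exp(1) and γ uniform on [0,1], independent, and w := log(1 + γh). Then for r ≥ 0, P(w ≥ r) = ∫₀^1 exp(−(e^r − 1)/y) dy, and consequently log P(w ≥ r) ~ −e^r as r → ∞. -/

import Mathlib

open MeasureTheory ProbabilityTheory Real Filter Set


lemma aux_integ (t : ℝ) (ht : 0 ≤ t) :
    IntegrableOn (fun y : ℝ => Real.exp (-t/y)) (Ioc 0 1) := by
  have hm : Measurable fun y : ℝ => Real.exp (-t/y) :=
    (measurable_const.div measurable_id).exp
  refine Integrable.mono' (integrable_const 1) hm.aestronglyMeasurable ?_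
  filter_upwards [ae_restrict_mem measurableSet_Ioc] with y hy
  rw [Real.norm_eq_abs, abs_of_pos (Real.exp_pos _)]
  rw [Real.exp_le_one_iff, neg_div, neg_nonpos]
  exact div_nonneg ht hy.1.le

lemma aux_upper (t : ℝ) (ht : 0 ≤ t) :
    ∫ y in Ioc (0:ℝ) 1, Real.exp (-t/y) ≤ Real.exp (-t) := by
  have h1 : ∫ y in Ioc (0:ℝ) 1, Real.exp (-t/y) ≤ ∫ _y in Ioc (0:ℝ) 1, Real.exp (-t) := by
    refine setIntegral_mono_on (aux_integ t ht) (integrableOn_const ?_)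
      measurableSet_Ioc ?_
    · simp [Real.volume_Ioc]
    · intro y hy
      apply Real.exp_le_exp.2
      rw [neg_div, neg_le_neg_iff]
      rw [le_div_iff₀ hy.1]
      nlinarith [hy.1, hy.2]
  calc _ ≤ _ := h1
    _ = Real.exp (-t) := by
        rw [setIntegral_const]
        simp [Real.volume_Ioc]

lemma aux_lower (t : ℝ) (ht : 2 ≤ t) :
    (1/t) * Real.exp (-(t^2/(t-1))) ≤ ∫ y in Ioc (0:ℝ) 1, Real.exp (-t/y) := by
  have ht0 : (0:ℝ) < t := by linarith
  have hd : (0:ℝ) < 1 - 1/t := by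
    rw [sub_pos, div_lt_one ht0]; linarith
  have hsub : Ioc (1 - 1/t) 1 ⊆ Ioc (0:ℝ) 1 := fun y hy => ⟨lt_trans hd hy.1, hy.2⟩
  have h2 : ∫ y in Ioc (1 - 1/t) 1, Real.exp (-t/y) ≤ ∫ y in Ioc (0:ℝ) 1, Real.exp (-t/y) := by
    refine setIntegral_mono_set (aux_integ t (by linarith)) ?_ (HasSubset.Subset.eventuallyLE hsub)
    filter_upwards with y using (Real.exp_pos _).le
  refine le_trans ?_ h2
  have key : t/(1 - 1/t) = t^2/(t-1) := by
    field_simp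
  have h3 : ∫ _y in Ioc (1 - 1/t) 1, Real.exp (-(t^2/(t-1))) ≤ ∫ y in Ioc (1 - 1/t) 1, Real.exp (-t/y) := by
    refine setIntegral_mono_on (integrableOn_const ?_)
      ((aux_integ t (by linarith)).mono_set hsub) measurableSet_Ioc ?_
    · simp [Real.volume_Ioc]
    · intro y hy
      apply Real.exp_le_exp.2
      rw [← key, neg_div, neg_le_neg_iff]
      exact div_le_div_of_nonneg_left (by linarith) hd hy.1.le
  refine le_trans (le_of_eq ?_) h3
  rw [setIntegral_const, measureReal_def, Real.volume_Ioc, smul_eq_mul]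
  have : 1 - (1 - 1/t) = 1/t := by ring
  rw [this, ENNReal.toReal_ofReal (by positivity)]


lemma aux_limit :
    Tendsto (fun r : ℝ => Real.log (∫ y in Ioc (0:ℝ) 1, Real.exp (-(Real.exp r - 1)/y))
      / (-(Real.exp r))) atTop (nhds 1) := by
  have hev : ∀ᶠ r : ℝ in atTop, 3 ≤ Real.exp r - 1 := by
    filter_upwards [eventually_ge_atTop (3:ℝ)] with r hr
    have := Real.add_one_le_exp r
    linarith
  -- lower bound function tends to 1
  have hlow : Tendsto (fun r : ℝ => (Real.exp r - 1) / Real.exp r) atTop (nhds 1) := by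
    have h1 : Tendsto (fun r : ℝ => 1 - Real.exp (-r)) atTop (nhds (1 - 0)) :=
      tendsto_const_nhds.sub (Real.tendsto_exp_atBot.comp tendsto_neg_atTop_atBot)
    rw [sub_zero] at h1
    refine h1.congr (fun r => ?_)
    rw [Real.exp_neg]
    field_simp
  -- piece A of upper bound tends to 0
  have hA : Tendsto (fun r : ℝ => Real.log (Real.exp r - 1) / Real.exp r) atTop (nhds 0) := by
    refine tendsto_of_tendsto_of_tendsto_of_le_of_le'
      (g := fun _ : ℝ => (0:ℝ)) (h := fun r : ℝ => r * Real.exp (-r))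
      tendsto_const_nhds ?_ ?_ ?_
    · simpa [pow_one] using Real.tendsto_pow_mul_exp_neg_atTop_nhds_zero 1
    · filter_upwards [hev] with r hr
      have h1 : (1:ℝ) ≤ Real.exp r - 1 := by linarith
      have := Real.log_nonneg h1
      positivity
    · filter_upwards [hev] with r hr
      rw [Real.exp_neg, ← div_eq_mul_inv]
      gcongr
      calc Real.log (Real.exp r - 1) ≤ Real.log (Real.exp r) :=
            Real.log_le_log (by linarith) (by linarith)
        _ = r := Real.log_exp r
  -- piece B of upper bound tends to 1
  have hB : Tendsto (fun r : ℝ => (Real.exp r - 1)^2 / ((Real.exp r - 2) * Real.exp r))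
      atTop (nhds 1) := by
    have hg : Tendsto (fun x : ℝ => 1 + (x^2 - 1)⁻¹) atTop (nhds (1 + 0)) := by
      refine tendsto_const_nhds.add (tendsto_inv_atTop_zero.comp ?_)
      apply tendsto_atTop_mono' _ _ (tendsto_atTop_add_const_right atTop (-1) tendsto_id)
      filter_upwards [eventually_ge_atTop (1:ℝ)] with x hx
      simp only [id]
      nlinarith
    rw [add_zero] at hg
    have hcomp := hg.comp (tendsto_atTop_add_const_right atTop (-1) Real.tendsto_exp_atTop)
    refine hcomp.congr' ?_
    filter_upwards [hev] with r hr
    simp only [Function.comp]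
    have h0 : Real.exp r + -1 = Real.exp r - 1 := by ring
    rw [h0]
    have h1 : (Real.exp r - 1)^2 - 1 ≠ 0 := by nlinarith
    have h2 : (Real.exp r - 2) * Real.exp r ≠ 0 := by nlinarith [Real.exp_pos r]
    have h3 : Real.exp r - 2 ≠ 0 := by linarith
    field_simp
    ring
  have hup : Tendsto (fun r : ℝ => Real.log (Real.exp r - 1) / Real.exp r
      + (Real.exp r - 1)^2 / ((Real.exp r - 2) * Real.exp r)) atTop (nhds 1) := by
    simpa using hA.add hB
  refine tendsto_of_tendsto_of_tendsto_of_le_of_le' hlow hup ?_ ?_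
  · filter_upwards [hev] with r hr
    set t := Real.exp r - 1 with htdef
    have ht0 : (0:ℝ) < t := by linarith
    have hIpos : 0 < ∫ y in Ioc (0:ℝ) 1, Real.exp (-t/y) :=
      lt_of_lt_of_le (by positivity) (aux_lower t (by linarith))
    have h1 : Real.log (∫ y in Ioc (0:ℝ) 1, Real.exp (-t/y)) ≤ -t :=
      (Real.log_le_log hIpos (aux_upper t ht0.le)).trans (le_of_eq (Real.log_exp _))
    rw [div_neg, le_neg, ← neg_div]
    have hexppos := Real.exp_pos r
    rw [div_le_div_iff₀ hexppos hexppos]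
    nlinarith
  · filter_upwards [hev] with r hr
    set t := Real.exp r - 1 with htdef
    have ht0 : (0:ℝ) < t := by linarith
    have hIpos : 0 < ∫ y in Ioc (0:ℝ) 1, Real.exp (-t/y) :=
      lt_of_lt_of_le (by positivity) (aux_lower t (by linarith))
    have h1 : Real.log ((1/t) * Real.exp (-(t^2/(t-1))))
        ≤ Real.log (∫ y in Ioc (0:ℝ) 1, Real.exp (-t/y)) :=
      Real.log_le_log (by positivity) (aux_lower t (by linarith))
    rw [Real.log_mul (by positivity) (by positivity), Real.log_exp,
      Real.log_div one_ne_zero (by positivity), Real.log_one, zero_sub] at h1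
    have h2 : (-Real.log t + -(t^2/(t-1))) / Real.exp r
        ≤ Real.log (∫ y in Ioc (0:ℝ) 1, Real.exp (-t/y)) / Real.exp r := by
      gcongr
    have h3 : -(Real.log t / Real.exp r + t^2/((Real.exp r - 2) * Real.exp r))
        = (-Real.log t + -(t^2/(t-1))) / Real.exp r := by
      have he : Real.exp r - 2 = t - 1 := by rw [htdef]; ring
      have ht1 : t - 1 ≠ 0 := by intro hc; rw [sub_eq_zero] at hc; linarith
      rw [he]
      field_simp
      ring
    rw [div_neg, neg_le, h3]
    exact h2


/-- For h ~ Exp(1) and γ uniform on [0,1] independent, w := log(1 + γh) satisfies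
P(w ≥ r) = ∫₀^1 exp(−(e^r − 1)/y) dy for r ≥ 0, and log P(w ≥ r) ~ −e^r as r → ∞. -/
theorem stmt_17 {Ω : Type*} [MeasureSpace Ω] [IsProbabilityMeasure (ℙ : Measure Ω)]
    (γ h : Ω → ℝ) (hγm : Measurable γ) (hhm : Measurable h)
    (hγlaw : Measure.map γ ℙ = volume.restrict (Set.Icc (0:ℝ) 1))
    (hexp : ∀ t : ℝ, 0 ≤ t → (ℙ {ω | t ≤ h ω}).toReal = Real.exp (-t))
    (hind : IndepFun γ h) :
    (∀ r : ℝ, 0 ≤ r → (ℙ {ω | r ≤ Real.log (1 + γ ω * h ω)}).toReal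
        = ∫ y in Set.Ioc (0:ℝ) 1, Real.exp (-(Real.exp r - 1) / y)) ∧
    Tendsto (fun r : ℝ =>
        Real.log ((ℙ {ω | r ≤ Real.log (1 + γ ω * h ω)}).toReal) / (-(Real.exp r)))
      atTop (nhds 1) := by
  have hpart1 : ∀ r : ℝ, 0 ≤ r → (ℙ {ω | r ≤ Real.log (1 + γ ω * h ω)}).toReal
      = ∫ y in Set.Ioc (0:ℝ) 1, Real.exp (-(Real.exp r - 1) / y) := by
    -- a.e. facts
    have hγae : ∀ᵐ ω ∂(ℙ : Measure Ω), 0 ≤ γ ω := by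
      have hpre : ℙ (γ ⁻¹' (Icc 0 1)) = 1 := by
        rw [← Measure.map_apply hγm measurableSet_Icc, hγlaw,
          Measure.restrict_apply measurableSet_Icc, inter_self, Real.volume_Icc]
        norm_num
      have := ae_iff_measure_eq (μ := (ℙ : Measure Ω)) (p := fun ω => γ ω ∈ Icc (0:ℝ) 1)
        (hγm measurableSet_Icc).nullMeasurableSet
      filter_upwards [this.2 (by rw [measure_univ]; exact hpre)] with ω hω using hω.1
    have hhae : ∀ᵐ ω ∂(ℙ : Measure Ω), 0 ≤ h ω := by
      have h1 : (ℙ {ω | 0 ≤ h ω}).toReal = 1 := by simpa using hexp 0 le_rfl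
      have h2 : ℙ {ω | 0 ≤ h ω} = 1 := (ENNReal.toReal_eq_one_iff _).1 h1
      have : {ω | 0 ≤ h ω} = h ⁻¹' (Ici 0) := rfl
      have hmeas := (hhm measurableSet_Ici : MeasurableSet (h ⁻¹' (Ici (0:ℝ))))
      refine (ae_iff_measure_eq (p := fun ω => 0 ≤ h ω) hmeas.nullMeasurableSet).2 ?_
      rw [measure_univ]
      exact h2
    set ν := Measure.map h ℙ with hν
    haveI : IsProbabilityMeasure ν := Measure.isProbabilityMeasure_map hhm.aemeasurable
    have hνIci : ∀ s : ℝ, 0 ≤ s → ν (Ici s) = ENNReal.ofReal (Real.exp (-s)) := by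
      intro s hs
      have h1 : ν (Ici s) = ℙ {ω | s ≤ h ω} := Measure.map_apply hhm measurableSet_Ici
      rw [h1, ← hexp s hs, ENNReal.ofReal_toReal (measure_ne_top _ _)]
    intro r hr
    set t := Real.exp r - 1 with htdef
    have ht : 0 ≤ t := by
      rw [htdef, sub_nonneg]
      exact Real.one_le_exp hr
    -- a.e. event equality
    have hset : ℙ {ω | r ≤ Real.log (1 + γ ω * h ω)} = ℙ {ω | t ≤ γ ω * h ω} := by
      apply measure_congr
      rw [Filter.eventuallyEq_set]
      filter_upwards [hγae, hhae] with ω h1 h2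
      have h0 : 0 < 1 + γ ω * h ω := by nlinarith
      rw [Real.le_log_iff_exp_le h0]
      simp only [htdef]
      constructor <;> intro hh <;> linarith
    rw [hset]
    -- joint law
    have hmap : Measure.map (fun ω => (γ ω, h ω)) ℙ = (Measure.map γ ℙ).prod ν :=
      (indepFun_iff_map_prod_eq_prod_map_map hγm.aemeasurable hhm.aemeasurable).1 hind
    have hTm : MeasurableSet {p : ℝ × ℝ | t ≤ p.1 * p.2} :=
      measurableSet_le measurable_const (measurable_fst.mul measurable_snd)
    have hP : ℙ {ω | t ≤ γ ω * h ω} = ((Measure.map γ ℙ).prod ν) {p : ℝ × ℝ | t ≤ p.1 * p.2} := by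
      rw [← hmap, Measure.map_apply (hγm.prodMk hhm) hTm]
      rfl
    rw [hP, Measure.prod_apply hTm, hγlaw]
    have hIccIoc : (volume : Measure ℝ).restrict (Icc (0:ℝ) 1)
        = (volume : Measure ℝ).restrict (Ioc (0:ℝ) 1) :=
      (Measure.restrict_congr_set Ioc_ae_eq_Icc).symm
    rw [hIccIoc]
    have hkey : ∫⁻ y in Ioc (0:ℝ) 1, ν (Prod.mk y ⁻¹' {p : ℝ × ℝ | t ≤ p.1 * p.2})
        = ∫⁻ y in Ioc (0:ℝ) 1, ENNReal.ofReal (Real.exp (-t/y)) := by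
      refine setLIntegral_congr_fun measurableSet_Ioc (fun y hy => ?_)
      have hy0 : 0 < y := hy.1
      have hpre : Prod.mk y ⁻¹' {p : ℝ × ℝ | t ≤ p.1 * p.2} = Ici (t/y) := by
        ext x
        simp only [mem_preimage, mem_setOf_eq, mem_Ici]
        rw [div_le_iff₀ hy0]
        constructor <;> intro hh <;> nlinarith
      rw [hpre, hνIci (t/y) (div_nonneg ht hy0.le), neg_div]
    rw [hkey]
    have hsm : AEStronglyMeasurable (fun y : ℝ => Real.exp (-t/y))
        (volume.restrict (Ioc (0:ℝ) 1)) := by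
      apply Measurable.aestronglyMeasurable
      fun_prop
    rw [integral_eq_lintegral_of_nonneg_ae (ae_of_all _ fun y => (Real.exp_pos _).le) hsm]
  refine ⟨hpart1, ?_⟩
  refine Filter.Tendsto.congr' ?_ aux_limit
  filter_upwards [eventually_ge_atTop (0:ℝ)] with r hr
  rw [hpart1 r hr]
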